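/- arXiv:2202.00762 — 4 statements merged into one kernel-verified Lean document; each statement's English description precedes it below -/
import Mathlib

section
/- Let E₁ and E₂ be finite-dimensional real inner product spaces equipped with σ-finite measures μ₁ and μ₂, let φ, γ : E₁ → ℝ and ψ, β : E₂ → ℝ be differentiable, and assume the functions x ↦ ⟪∇φ(x), ∇γ(x)⟫, x ↦ φ(x)γ(x) are integrable with respect to μ₁ and y ↦ ψ(y)β(y), y ↦ ⟪∇ψ(y), ∇β(y)⟫ are integrable with respect to μ₂. Then ∫_{E₁×E₂} ⟪∇(φψ)(x,y), ∇(γβ)(x,y)⟫ d(μ₁ × μ₂) = (∫_{E₁} ⟪∇φ, ∇γ⟫ dμ₁)(∫_{E₂} ψ β dμ₂) + (∫_{E₁} φ γ dμ₁)(∫_{E₂} ⟪∇ψ, ∇β⟫ dμ₂). -/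
open RealInnerProductSpace MeasureTheory

open InnerProductSpace in
lemma gradient_tensor_aux {E₁ E₂ : Type*}
    [NormedAddCommGroup E₁] [InnerProductSpace ℝ E₁] [CompleteSpace E₁]
    [NormedAddCommGroup E₂] [InnerProductSpace ℝ E₂] [CompleteSpace E₂]
    (φ : E₁ → ℝ) (ψ : E₂ → ℝ) (hφ : Differentiable ℝ φ) (hψ : Differentiable ℝ ψ)
    (x : E₁) (y : E₂) :
    gradient (fun q : WithLp 2 (E₁ × E₂) =>
        φ (WithLp.equiv 2 (E₁ × E₂) q).1 * ψ (WithLp.equiv 2 (E₁ × E₂) q).2)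
      ((WithLp.equiv 2 (E₁ × E₂)).symm (x, y))
    = (WithLp.equiv 2 (E₁ × E₂)).symm (ψ y • gradient φ x, φ x • gradient ψ y) := by
  apply HasGradientAt.gradient
  rw [hasGradientAt_iff_hasFDerivAt]
  set e : WithLp 2 (E₁ × E₂) ≃L[ℝ] E₁ × E₂ := WithLp.prodContinuousLinearEquiv 2 ℝ E₁ E₂
  have h1 : HasFDerivAt φ (toDual ℝ E₁ (gradient φ x)) x :=
    ((hφ x).hasGradientAt).hasFDerivAt
  have h2 : HasFDerivAt ψ (toDual ℝ E₂ (gradient ψ y)) y :=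
    ((hψ y).hasGradientAt).hasFDerivAt
  have HF : HasFDerivAt (fun p : E₁ × E₂ => φ p.1 * ψ p.2)
      (φ x • ((toDual ℝ E₂ (gradient ψ y)).comp (ContinuousLinearMap.snd ℝ E₁ E₂))
        + ψ y • ((toDual ℝ E₁ (gradient φ x)).comp (ContinuousLinearMap.fst ℝ E₁ E₂)))
      (x, y) :=
    HasFDerivAt.fun_mul (c := fun p : E₁ × E₂ => φ p.1) (d := fun p : E₁ × E₂ => ψ p.2)
      (h1.comp (x, y) hasFDerivAt_fst) (h2.comp (x, y) hasFDerivAt_snd)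
  have Hcomp : HasFDerivAt
      ((fun p : E₁ × E₂ => φ p.1 * ψ p.2) ∘ e)
      ((φ x • ((toDual ℝ E₂ (gradient ψ y)).comp (ContinuousLinearMap.snd ℝ E₁ E₂))
        + ψ y • ((toDual ℝ E₁ (gradient φ x)).comp (ContinuousLinearMap.fst ℝ E₁ E₂))).comp
          (e : WithLp 2 (E₁ × E₂) →L[ℝ] E₁ × E₂))
      ((WithLp.equiv 2 (E₁ × E₂)).symm (x, y)) :=
    HasFDerivAt.comp (x := (WithLp.equiv 2 (E₁ × E₂)).symm (x, y)) (hf := e.hasFDerivAt) (hg := HF)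
  have key : toDual ℝ (WithLp 2 (E₁ × E₂))
      ((WithLp.equiv 2 (E₁ × E₂)).symm (ψ y • gradient φ x, φ x • gradient ψ y))
      = (φ x • ((toDual ℝ E₂ (gradient ψ y)).comp (ContinuousLinearMap.snd ℝ E₁ E₂))
        + ψ y • ((toDual ℝ E₁ (gradient φ x)).comp (ContinuousLinearMap.fst ℝ E₁ E₂))).comp
          (e : WithLp 2 (E₁ × E₂) →L[ℝ] E₁ × E₂) := by
    ext v
    simp only [toDual_apply_apply, ContinuousLinearMap.coe_comp', Function.comp_apply,
      ContinuousLinearMap.add_apply, ContinuousLinearMap.coe_smul',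
      Pi.smul_apply, ContinuousLinearMap.coe_fst', ContinuousLinearMap.coe_snd',
      WithLp.prod_inner_apply, WithLp.equiv_symm_apply, WithLp.ofLp_toLp,
      real_inner_smul_left, smul_eq_mul]
    ring_nf
    rfl
  rw [key]
  exact Hcomp

/-- Fubini factorization of the Poisson stiffness integrand for tensor product
functions: the integral over `E₁ × E₂` of `⟪∇(φψ), ∇(γβ)⟫` (gradients taken on the product
inner product space) splits as
`(∫ ⟪∇φ, ∇γ⟫ dμ₁)(∫ ψβ dμ₂) + (∫ φγ dμ₁)(∫ ⟪∇ψ, ∇β⟫ dμ₂)`. -/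
theorem integral_inner_gradient_tensor_product {E₁ E₂ : Type*}
    [NormedAddCommGroup E₁] [InnerProductSpace ℝ E₁] [FiniteDimensional ℝ E₁]
    [MeasurableSpace E₁] [BorelSpace E₁]
    [NormedAddCommGroup E₂] [InnerProductSpace ℝ E₂] [FiniteDimensional ℝ E₂]
    [MeasurableSpace E₂] [BorelSpace E₂]
    (μ₁ : Measure E₁) (μ₂ : Measure E₂) [SigmaFinite μ₁] [SigmaFinite μ₂]
    (φ γ : E₁ → ℝ) (ψ β : E₂ → ℝ)
    (hφ : Differentiable ℝ φ) (hγ : Differentiable ℝ γ)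
    (hψ : Differentiable ℝ ψ) (hβ : Differentiable ℝ β)
    (h₁₁ : Integrable (fun x => ⟪gradient φ x, gradient γ x⟫) μ₁)
    (h₁₂ : Integrable (fun x => φ x * γ x) μ₁)
    (h₂₂ : Integrable (fun y => ψ y * β y) μ₂)
    (h₂₁ : Integrable (fun y => ⟪gradient ψ y, gradient β y⟫) μ₂) :
    ∫ p : E₁ × E₂,
        ⟪gradient
            (fun q : WithLp 2 (E₁ × E₂) =>
              φ (WithLp.equiv 2 (E₁ × E₂) q).1 * ψ (WithLp.equiv 2 (E₁ × E₂) q).2)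
            ((WithLp.equiv 2 (E₁ × E₂)).symm p),
          gradient
            (fun q : WithLp 2 (E₁ × E₂) =>
              γ (WithLp.equiv 2 (E₁ × E₂) q).1 * β (WithLp.equiv 2 (E₁ × E₂) q).2)
            ((WithLp.equiv 2 (E₁ × E₂)).symm p)⟫ ∂(μ₁.prod μ₂)
      = (∫ x, ⟪gradient φ x, gradient γ x⟫ ∂μ₁) * (∫ y, ψ y * β y ∂μ₂)
        + (∫ x, φ x * γ x ∂μ₁) * (∫ y, ⟪gradient ψ y, gradient β y⟫ ∂μ₂) := by
  have hpt : ∀ p : E₁ × E₂,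
      ⟪gradient
            (fun q : WithLp 2 (E₁ × E₂) =>
              φ (WithLp.equiv 2 (E₁ × E₂) q).1 * ψ (WithLp.equiv 2 (E₁ × E₂) q).2)
            ((WithLp.equiv 2 (E₁ × E₂)).symm p),
          gradient
            (fun q : WithLp 2 (E₁ × E₂) =>
              γ (WithLp.equiv 2 (E₁ × E₂) q).1 * β (WithLp.equiv 2 (E₁ × E₂) q).2)
            ((WithLp.equiv 2 (E₁ × E₂)).symm p)⟫
      = ⟪gradient φ p.1, gradient γ p.1⟫ * (ψ p.2 * β p.2)
        + (φ p.1 * γ p.1) * ⟪gradient ψ p.2, gradient β p.2⟫ := by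
    rintro ⟨x, y⟩
    rw [gradient_tensor_aux φ ψ hφ hψ x y, gradient_tensor_aux γ β hγ hβ x y]
    simp only [WithLp.prod_inner_apply, WithLp.equiv_symm_apply, WithLp.ofLp_toLp,
      real_inner_smul_left, real_inner_smul_right]
    ring
  calc ∫ p : E₁ × E₂, ⟪gradient
            (fun q : WithLp 2 (E₁ × E₂) =>
              φ (WithLp.equiv 2 (E₁ × E₂) q).1 * ψ (WithLp.equiv 2 (E₁ × E₂) q).2)
            ((WithLp.equiv 2 (E₁ × E₂)).symm p),
          gradient
            (fun q : WithLp 2 (E₁ × E₂) =>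
              γ (WithLp.equiv 2 (E₁ × E₂) q).1 * β (WithLp.equiv 2 (E₁ × E₂) q).2)
            ((WithLp.equiv 2 (E₁ × E₂)).symm p)⟫ ∂(μ₁.prod μ₂)
      = ∫ p : E₁ × E₂,
          (⟪gradient φ p.1, gradient γ p.1⟫ * (ψ p.2 * β p.2)
            + (φ p.1 * γ p.1) * ⟪gradient ψ p.2, gradient β p.2⟫) ∂(μ₁.prod μ₂) := by
        exact integral_congr_ae (Filter.Eventually.of_forall hpt)
    _ = (∫ p : E₁ × E₂, ⟪gradient φ p.1, gradient γ p.1⟫ * (ψ p.2 * β p.2) ∂(μ₁.prod μ₂))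
        + ∫ p : E₁ × E₂, (φ p.1 * γ p.1) * ⟪gradient ψ p.2, gradient β p.2⟫ ∂(μ₁.prod μ₂) :=
        integral_add (h₁₁.mul_prod h₂₂) (h₁₂.mul_prod h₂₁)
    _ = (∫ x, ⟪gradient φ x, gradient γ x⟫ ∂μ₁) * (∫ y, ψ y * β y ∂μ₂)
        + (∫ x, φ x * γ x ∂μ₁) * (∫ y, ⟪gradient ψ y, gradient β y⟫ ∂μ₂) := by
        rw [integral_prod_mul (fun x => ⟪gradient φ x, gradient γ x⟫) (fun y => ψ y * β y),
          integral_prod_mul (fun x => φ x * γ x) (fun y => ⟪gradient ψ y, gradient β y⟫)]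
end

section
/- Let E₁ and E₂ be finite-dimensional real inner product spaces equipped with σ-finite measures μ₁ and μ₂, and let (φ_i)_{i∈Fin N}, (γ_k)_{k∈Fin N} : E₁ → ℝ and (ψ_j)_{j∈Fin M}, (β_l)_{l∈Fin M} : E₂ → ℝ be differentiable functions such that all the products ⟪∇φ_i, ∇γ_k⟫, φ_i γ_k are μ₁-integrable and all ψ_j β_l, ⟪∇ψ_j, ∇β_l⟫ are μ₂-integrable. Define matrices K₁₁, K₁₂ ∈ Matrix (Fin N) (Fin N) ℝ by (K₁₁)_{k i} = ∫ ⟪∇φ_i, ∇γ_k⟫ dμ₁, (K₁₂)_{k i} = ∫ φ_i γ_k dμ₁, and K₂₁, K₂₂ ∈ Matrix (Fin M) (Fin M) ℝ by (K₂₁)_{l j} = ∫ ⟪∇ψ_j, ∇β_l⟫ dμ₂, (K₂₂)_{l j} = ∫ ψ_j β_l dμ₂. Then the matrix A ∈ Matrix (Fin N × Fin M) (Fin N × Fin M) ℝ with entries A_{(k,l),(i,j)} = ∫_{E₁×E₂} ⟪∇(φ_i ψ_j), ∇(γ_k β_l)⟫ d(μ₁ × μ₂) equals the sum of Kronecker products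 K₁₁ ⊗ K₂₂ + K₁₂ ⊗ K₂₁. -/
open RealInnerProductSpace MeasureTheory Kronecker

section Aux

variable {E₁ E₂ : Type*}
    [NormedAddCommGroup E₁] [InnerProductSpace ℝ E₁] [CompleteSpace E₁]
    [NormedAddCommGroup E₂] [InnerProductSpace ℝ E₂] [CompleteSpace E₂]

lemma fderiv_eq_inner_gradient (f : E₁ → ℝ) (hf : Differentiable ℝ f) (x : E₁) (v : E₁) :
    fderiv ℝ f x v = ⟪gradient f x, v⟫ := by
  have h := ((hf x).hasGradientAt).hasFDerivAt
  rw [h.fderiv]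
  simp [InnerProductSpace.toDual_apply_apply]

lemma hasGradient_prod_mul (f : E₁ → ℝ) (g : E₂ → ℝ)
    (hf : Differentiable ℝ f) (hg : Differentiable ℝ g) (x : E₁) (y : E₂) :
    HasGradientAt
      (fun q : WithLp 2 (E₁ × E₂) =>
        f (WithLp.equiv 2 (E₁ × E₂) q).1 * g (WithLp.equiv 2 (E₁ × E₂) q).2)
      ((WithLp.equiv 2 (E₁ × E₂)).symm (g y • gradient f x, f x • gradient g y))
      ((WithLp.equiv 2 (E₁ × E₂)).symm (x, y)) := by
  rw [hasGradientAt_iff_hasFDerivAt]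
  set L : WithLp 2 (E₁ × E₂) ≃L[ℝ] E₁ × E₂ := WithLp.prodContinuousLinearEquiv 2 ℝ E₁ E₂
  have hG : HasFDerivAt (fun p : E₁ × E₂ => f p.1 * g p.2)
      (g y • ((fderiv ℝ f x).comp (ContinuousLinearMap.fst ℝ E₁ E₂)) +
        f x • ((fderiv ℝ g y).comp (ContinuousLinearMap.snd ℝ E₁ E₂))) (x, y) := by
    have h1 : HasFDerivAt (fun p : E₁ × E₂ => f p.1)
        ((fderiv ℝ f x).comp (ContinuousLinearMap.fst ℝ E₁ E₂)) (x, y) :=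
      ((hf x).hasFDerivAt).comp (x, y) (hasFDerivAt_fst)
    have h2 : HasFDerivAt (fun p : E₁ × E₂ => g p.2)
        ((fderiv ℝ g y).comp (ContinuousLinearMap.snd ℝ E₁ E₂)) (x, y) :=
      ((hg y).hasFDerivAt).comp (x, y) (hasFDerivAt_snd)
    have := h1.mul h2
    rw [add_comm]
    exact this
  have hL : HasFDerivAt (fun q : WithLp 2 (E₁ × E₂) => f (L q).1 * g (L q).2)
      (((g y • ((fderiv ℝ f x).comp (ContinuousLinearMap.fst ℝ E₁ E₂)) +
        f x • ((fderiv ℝ g y).comp (ContinuousLinearMap.snd ℝ E₁ E₂)))).comp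
        (L : WithLp 2 (E₁ × E₂) →L[ℝ] E₁ × E₂))
      ((WithLp.equiv 2 (E₁ × E₂)).symm (x, y)) := by
    have hLd := L.hasFDerivAt (x := (WithLp.equiv 2 (E₁ × E₂)).symm (x, y))
    have := hG.comp ((WithLp.equiv 2 (E₁ × E₂)).symm (x, y))
      (by simpa using hLd)
    exact this
  refine hL.congr_fderiv ?_
  ext v
  simp only [InnerProductSpace.toDual_apply_apply, WithLp.prod_inner_apply,
    WithLp.equiv_symm_apply, WithLp.ofLp_toLp, ContinuousLinearMap.coe_comp',
    Function.comp_apply, ContinuousLinearMap.add_apply, ContinuousLinearMap.coe_smul',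
    Pi.smul_apply, smul_eq_mul, ContinuousLinearMap.coe_fst', ContinuousLinearMap.coe_snd']
  rw [real_inner_smul_left, real_inner_smul_left,
    fderiv_eq_inner_gradient f hf, fderiv_eq_inner_gradient g hg]
  rfl

lemma inner_gradient_prod_mul (f γ : E₁ → ℝ) (g δ : E₂ → ℝ)
    (hf : Differentiable ℝ f) (hγ : Differentiable ℝ γ)
    (hg : Differentiable ℝ g) (hδ : Differentiable ℝ δ) (p : E₁ × E₂) :
    ⟪gradient
        (fun q : WithLp 2 (E₁ × E₂) =>
          f (WithLp.equiv 2 (E₁ × E₂) q).1 * g (WithLp.equiv 2 (E₁ × E₂) q).2)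
        ((WithLp.equiv 2 (E₁ × E₂)).symm p),
      gradient
        (fun q : WithLp 2 (E₁ × E₂) =>
          γ (WithLp.equiv 2 (E₁ × E₂) q).1 * δ (WithLp.equiv 2 (E₁ × E₂) q).2)
        ((WithLp.equiv 2 (E₁ × E₂)).symm p)⟫ =
    ⟪gradient f p.1, gradient γ p.1⟫ * (g p.2 * δ p.2) +
      (f p.1 * γ p.1) * ⟪gradient g p.2, gradient δ p.2⟫ := by
  obtain ⟨x, y⟩ := p
  rw [(hasGradient_prod_mul f g hf hg x y).gradient,
    (hasGradient_prod_mul γ δ hγ hδ x y).gradient]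
  simp only [WithLp.prod_inner_apply, WithLp.equiv_symm_apply, WithLp.ofLp_toLp]
  rw [real_inner_smul_left, real_inner_smul_right, real_inner_smul_left, real_inner_smul_right]
  ring

end Aux

/-- The global tensor product finite element stiffness matrix of the Poisson
bilinear form, `A_{(k,l),(i,j)} = ∫_{E₁×E₂} ⟪∇(φᵢψⱼ), ∇(γₖβₗ)⟫ d(μ₁ × μ₂)`, equals the sum
of Kronecker products `K₁₁ ⊗ K₂₂ + K₁₂ ⊗ K₂₁` of the subdomain matrices. -/
theorem stiffness_matrix_kronecker {E₁ E₂ : Type*} {N M : ℕ}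
    [NormedAddCommGroup E₁] [InnerProductSpace ℝ E₁] [FiniteDimensional ℝ E₁]
    [MeasurableSpace E₁] [BorelSpace E₁]
    [NormedAddCommGroup E₂] [InnerProductSpace ℝ E₂] [FiniteDimensional ℝ E₂]
    [MeasurableSpace E₂] [BorelSpace E₂]
    (μ₁ : Measure E₁) (μ₂ : Measure E₂) [SigmaFinite μ₁] [SigmaFinite μ₂]
    (φ γ : Fin N → E₁ → ℝ) (ψ β : Fin M → E₂ → ℝ)
    (hφ : ∀ i, Differentiable ℝ (φ i)) (hγ : ∀ k, Differentiable ℝ (γ k))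
    (hψ : ∀ j, Differentiable ℝ (ψ j)) (hβ : ∀ l, Differentiable ℝ (β l))
    (h₁₁ : ∀ i k, Integrable (fun x => ⟪gradient (φ i) x, gradient (γ k) x⟫) μ₁)
    (h₁₂ : ∀ i k, Integrable (fun x => φ i x * γ k x) μ₁)
    (h₂₂ : ∀ j l, Integrable (fun y => ψ j y * β l y) μ₂)
    (h₂₁ : ∀ j l, Integrable (fun y => ⟪gradient (ψ j) y, gradient (β l) y⟫) μ₂)
    (K₁₁ K₁₂ : Matrix (Fin N) (Fin N) ℝ) (K₂₁ K₂₂ : Matrix (Fin M) (Fin M) ℝ)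
    (hK₁₁ : ∀ k i, K₁₁ k i = ∫ x, ⟪gradient (φ i) x, gradient (γ k) x⟫ ∂μ₁)
    (hK₁₂ : ∀ k i, K₁₂ k i = ∫ x, φ i x * γ k x ∂μ₁)
    (hK₂₁ : ∀ l j, K₂₁ l j = ∫ y, ⟪gradient (ψ j) y, gradient (β l) y⟫ ∂μ₂)
    (hK₂₂ : ∀ l j, K₂₂ l j = ∫ y, ψ j y * β l y ∂μ₂)
    (A : Matrix (Fin N × Fin M) (Fin N × Fin M) ℝ)
    (hA : ∀ k l i j, A (k, l) (i, j) =
      ∫ p : E₁ × E₂,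
        ⟪gradient
            (fun q : WithLp 2 (E₁ × E₂) =>
              φ i (WithLp.equiv 2 (E₁ × E₂) q).1 * ψ j (WithLp.equiv 2 (E₁ × E₂) q).2)
            ((WithLp.equiv 2 (E₁ × E₂)).symm p),
          gradient
            (fun q : WithLp 2 (E₁ × E₂) =>
              γ k (WithLp.equiv 2 (E₁ × E₂) q).1 * β l (WithLp.equiv 2 (E₁ × E₂) q).2)
            ((WithLp.equiv 2 (E₁ × E₂)).symm p)⟫ ∂(μ₁.prod μ₂)) :
    A = K₁₁ ⊗ₖ K₂₂ + K₁₂ ⊗ₖ K₂₁ := by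
  ext ⟨k, l⟩ ⟨i, j⟩
  rw [Matrix.add_apply, Matrix.kronecker_apply, Matrix.kronecker_apply, hA,
    hK₁₁, hK₁₂, hK₂₁, hK₂₂]
  have heq : (fun p : E₁ × E₂ =>
      ⟪gradient
          (fun q : WithLp 2 (E₁ × E₂) =>
            φ i (WithLp.equiv 2 (E₁ × E₂) q).1 * ψ j (WithLp.equiv 2 (E₁ × E₂) q).2)
          ((WithLp.equiv 2 (E₁ × E₂)).symm p),
        gradient
          (fun q : WithLp 2 (E₁ × E₂) =>
            γ k (WithLp.equiv 2 (E₁ × E₂) q).1 * β l (WithLp.equiv 2 (E₁ × E₂) q).2)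
          ((WithLp.equiv 2 (E₁ × E₂)).symm p)⟫) =
      fun p : E₁ × E₂ =>
        ⟪gradient (φ i) p.1, gradient (γ k) p.1⟫ * (ψ j p.2 * β l p.2) +
          (φ i p.1 * γ k p.1) * ⟪gradient (ψ j) p.2, gradient (β l) p.2⟫ := by
    funext p
    exact inner_gradient_prod_mul (φ i) (γ k) (ψ j) (β l) (hφ i) (hγ k) (hψ j) (hβ l) p
  rw [heq, integral_add ((h₁₁ i k).mul_prod (h₂₂ j l)) ((h₁₂ i k).mul_prod (h₂₁ j l)),
    integral_prod_mul (fun x => ⟪gradient (φ i) x, gradient (γ k) x⟫) (fun y => ψ j y * β l y),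
    integral_prod_mul (fun x => φ i x * γ k x)
      (fun y => ⟪gradient (ψ j) y, gradient (β l) y⟫)]
end

section
/- Under the setting of the Kronecker stiffness matrix identity (families φ_i, γ_k on E₁ and ψ_j, β_l on E₂ with the stated integrability, matrices K₁₁, K₁₂, K₂₁, K₂₂ as defined there), let U ∈ (Fin N × Fin M) → ℝ be coefficients, let u_h(x,y) = Σ_{i,j} U_{(i,j)} φ_i(x) ψ_j(y), and let G ∈ (Fin N × Fin M) → ℝ. Then the discrete Galerkin equations ∫_{E₁×E₂} ⟪∇u_h, ∇(γ_k β_l)⟫ d(μ₁ × μ₂) = G_{(k,l)} hold for all (k,l) ∈ Fin N × Fin M if and only if the linear system (K₁₁ ⊗ K₂₂ + K₁₂ ⊗ K₂₁) · U = G holds, where · denotes matrix–vector multiplication over the index set Fin N × Fin M. -/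
open RealInnerProductSpace MeasureTheory Kronecker

section Helpers

variable {E₁ E₂ : Type*}
  [NormedAddCommGroup E₁] [InnerProductSpace ℝ E₁] [CompleteSpace E₁]
  [NormedAddCommGroup E₂] [InnerProductSpace ℝ E₂] [CompleteSpace E₂]

theorem inner_gradient_eq {f : E₁ → ℝ} (x v : E₁) :
    ⟪gradient f x, v⟫ = fderiv ℝ f x v := by
  unfold gradient
  rw [InnerProductSpace.toDual_symm_apply]

theorem hasGradientAt_prod_mul {f : E₁ → ℝ} {g : E₂ → ℝ}
    (hf : Differentiable ℝ f) (hg : Differentiable ℝ g) (x : E₁) (y : E₂) :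
    HasGradientAt (fun q : WithLp 2 (E₁ × E₂) =>
        f (WithLp.equiv 2 (E₁ × E₂) q).1 * g (WithLp.equiv 2 (E₁ × E₂) q).2)
      ((WithLp.equiv 2 (E₁ × E₂)).symm (g y • gradient f x, f x • gradient g y))
      ((WithLp.equiv 2 (E₁ × E₂)).symm (x, y)) := by
  rw [hasGradientAt_iff_hasFDerivAt]
  have hF : HasFDerivAt (fun p : E₁ × E₂ => f p.1 * g p.2)
      (f x • ((fderiv ℝ g y).comp (ContinuousLinearMap.snd ℝ E₁ E₂)) +
        g y • ((fderiv ℝ f x).comp (ContinuousLinearMap.fst ℝ E₁ E₂))) (x, y) :=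
    by
      have h1 : HasFDerivAt (fun p : E₁ × E₂ => f p.1)
          ((fderiv ℝ f x).comp (ContinuousLinearMap.fst ℝ E₁ E₂)) (x, y) :=
        (hf x).hasFDerivAt.comp (x := (x, y)) hasFDerivAt_fst
      have h2 : HasFDerivAt (fun p : E₁ × E₂ => g p.2)
          ((fderiv ℝ g y).comp (ContinuousLinearMap.snd ℝ E₁ E₂)) (x, y) :=
        (hg y).hasFDerivAt.comp (x := (x, y)) hasFDerivAt_snd
      exact h1.fun_mul h2
  have hcomp := hF.comp (x := (WithLp.equiv 2 (E₁ × E₂)).symm (x, y))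
    ((WithLp.prodContinuousLinearEquiv 2 ℝ E₁ E₂).toContinuousLinearMap.hasFDerivAt)
  convert hcomp using 1
  · rfl
  · rfl
  · rfl
  ext v
  simp only [InnerProductSpace.toDual_apply_apply, WithLp.prod_inner_apply,
    WithLp.equiv_symm_apply, WithLp.ofLp_toLp, WithLp.equiv_apply, WithLp.ofLp_fst, WithLp.ofLp_snd, real_inner_smul_left,
    ContinuousLinearMap.coe_comp', Function.comp_apply, ContinuousLinearMap.add_apply,
    ContinuousLinearMap.coe_smul', Pi.smul_apply, ContinuousLinearEquiv.coe_coe,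
    WithLp.prodContinuousLinearEquiv_apply, ContinuousLinearMap.coe_fst',
    ContinuousLinearMap.coe_snd', smul_eq_mul, inner_gradient_eq]
  ring

end Helpers



/-- The discrete Galerkin equations for the tensor product finite element
discretization of the Poisson bilinear form, with trial function
`u_h(x,y) = Σ_{i,j} U_{(i,j)} φᵢ(x) ψⱼ(y)` and test functions `γₖ βₗ`, hold for all `(k,l)`
if and only if the Kronecker-structured linear system
`(K₁₁ ⊗ K₂₂ + K₁₂ ⊗ K₂₁) · U = G` holds. -/
theorem galerkin_system_iff_kronecker_system {E₁ E₂ : Type*} {N M : ℕ}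
    [NormedAddCommGroup E₁] [InnerProductSpace ℝ E₁] [FiniteDimensional ℝ E₁]
    [MeasurableSpace E₁] [BorelSpace E₁]
    [NormedAddCommGroup E₂] [InnerProductSpace ℝ E₂] [FiniteDimensional ℝ E₂]
    [MeasurableSpace E₂] [BorelSpace E₂]
    (μ₁ : Measure E₁) (μ₂ : Measure E₂) [SigmaFinite μ₁] [SigmaFinite μ₂]
    (φ γ : Fin N → E₁ → ℝ) (ψ β : Fin M → E₂ → ℝ)
    (hφ : ∀ i, Differentiable ℝ (φ i)) (hγ : ∀ k, Differentiable ℝ (γ k))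
    (hψ : ∀ j, Differentiable ℝ (ψ j)) (hβ : ∀ l, Differentiable ℝ (β l))
    (h₁₁ : ∀ i k, Integrable (fun x => ⟪gradient (φ i) x, gradient (γ k) x⟫) μ₁)
    (h₁₂ : ∀ i k, Integrable (fun x => φ i x * γ k x) μ₁)
    (h₂₂ : ∀ j l, Integrable (fun y => ψ j y * β l y) μ₂)
    (h₂₁ : ∀ j l, Integrable (fun y => ⟪gradient (ψ j) y, gradient (β l) y⟫) μ₂)
    (K₁₁ K₁₂ : Matrix (Fin N) (Fin N) ℝ) (K₂₁ K₂₂ : Matrix (Fin M) (Fin M) ℝ)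
    (hK₁₁ : ∀ k i, K₁₁ k i = ∫ x, ⟪gradient (φ i) x, gradient (γ k) x⟫ ∂μ₁)
    (hK₁₂ : ∀ k i, K₁₂ k i = ∫ x, φ i x * γ k x ∂μ₁)
    (hK₂₁ : ∀ l j, K₂₁ l j = ∫ y, ⟪gradient (ψ j) y, gradient (β l) y⟫ ∂μ₂)
    (hK₂₂ : ∀ l j, K₂₂ l j = ∫ y, ψ j y * β l y ∂μ₂)
    (U G : Fin N × Fin M → ℝ)
    (uh : WithLp 2 (E₁ × E₂) → ℝ)
    (huh : ∀ q, uh q = ∑ i, ∑ j,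
      U (i, j) * (φ i (WithLp.equiv 2 (E₁ × E₂) q).1 * ψ j (WithLp.equiv 2 (E₁ × E₂) q).2)) :
    (∀ k l,
      ∫ p : E₁ × E₂,
          ⟪gradient uh ((WithLp.equiv 2 (E₁ × E₂)).symm p),
            gradient
              (fun q : WithLp 2 (E₁ × E₂) =>
                γ k (WithLp.equiv 2 (E₁ × E₂) q).1 * β l (WithLp.equiv 2 (E₁ × E₂) q).2)
              ((WithLp.equiv 2 (E₁ × E₂)).symm p)⟫ ∂(μ₁.prod μ₂) = G (k, l))
      ↔ (K₁₁ ⊗ₖ K₂₂ + K₁₂ ⊗ₖ K₂₁).mulVec U = G := by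
  classical
  -- gradient of uh
  have hUH : ∀ (x : E₁) (y : E₂), HasGradientAt uh
      (∑ i, ∑ j, U (i, j) •
        (WithLp.equiv 2 (E₁ × E₂)).symm (ψ j y • gradient (φ i) x, φ i x • gradient (ψ j) y))
      ((WithLp.equiv 2 (E₁ × E₂)).symm (x, y)) := by
    intro x y
    have hE : uh = fun q => ∑ i, ∑ j, U (i, j) *
        (φ i (WithLp.equiv 2 (E₁ × E₂) q).1 * ψ j (WithLp.equiv 2 (E₁ × E₂) q).2) := funext huh
    rw [hE, hasGradientAt_iff_hasFDerivAt]
    have hterm : ∀ i j, HasFDerivAt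
        (fun q : WithLp 2 (E₁ × E₂) => U (i, j) *
          (φ i (WithLp.equiv 2 (E₁ × E₂) q).1 * ψ j (WithLp.equiv 2 (E₁ × E₂) q).2))
        (U (i, j) • (InnerProductSpace.toDual ℝ _
          ((WithLp.equiv 2 (E₁ × E₂)).symm (ψ j y • gradient (φ i) x, φ i x • gradient (ψ j) y))))
        ((WithLp.equiv 2 (E₁ × E₂)).symm (x, y)) := fun i j =>
      ((hasGradientAt_prod_mul (hφ i) (hψ j) x y).hasFDerivAt).const_mul (U (i, j))
    have hsum := HasFDerivAt.fun_sum (fun i (_ : i ∈ Finset.univ) =>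
      HasFDerivAt.fun_sum (fun j (_ : j ∈ Finset.univ) => hterm i j))
    convert hsum using 1
    · rfl
    · rfl
    simp [map_sum, _root_.map_smul]
  -- pointwise inner product formula
  have hptwise : ∀ (k : Fin N) (l : Fin M) (x : E₁) (y : E₂),
      (⟪gradient uh ((WithLp.equiv 2 (E₁ × E₂)).symm (x, y)),
        gradient (fun q : WithLp 2 (E₁ × E₂) =>
            γ k (WithLp.equiv 2 (E₁ × E₂) q).1 * β l (WithLp.equiv 2 (E₁ × E₂) q).2)
          ((WithLp.equiv 2 (E₁ × E₂)).symm (x, y))⟫ : ℝ)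
      = ∑ i, ∑ j, U (i, j) *
          (⟪gradient (φ i) x, gradient (γ k) x⟫ * (ψ j y * β l y)
            + φ i x * γ k x * ⟪gradient (ψ j) y, gradient (β l) y⟫) := by
    intro k l x y
    rw [(hUH x y).gradient, (hasGradientAt_prod_mul (hγ k) (hβ l) x y).gradient, sum_inner]
    refine Finset.sum_congr rfl fun i _ => ?_
    rw [sum_inner]
    refine Finset.sum_congr rfl fun j _ => ?_
    rw [real_inner_smul_left]
    simp only [WithLp.prod_inner_apply, WithLp.equiv_symm_apply, WithLp.ofLp_toLp,
      real_inner_smul_left, real_inner_smul_right]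
    ring
  have key : ∀ (k : Fin N) (l : Fin M),
      (∫ p : E₁ × E₂,
          ⟪gradient uh ((WithLp.equiv 2 (E₁ × E₂)).symm p),
            gradient
              (fun q : WithLp 2 (E₁ × E₂) =>
                γ k (WithLp.equiv 2 (E₁ × E₂) q).1 * β l (WithLp.equiv 2 (E₁ × E₂) q).2)
              ((WithLp.equiv 2 (E₁ × E₂)).symm p)⟫ ∂(μ₁.prod μ₂))
      = ((K₁₁ ⊗ₖ K₂₂ + K₁₂ ⊗ₖ K₂₁).mulVec U) (k, l) := by
    intro k l
    have hInt : ∀ (i : Fin N) (j : Fin M), Integrable (fun p : E₁ × E₂ =>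
        ⟪gradient (φ i) p.1, gradient (γ k) p.1⟫ * (ψ j p.2 * β l p.2)
          + φ i p.1 * γ k p.1 * ⟪gradient (ψ j) p.2, gradient (β l) p.2⟫) (μ₁.prod μ₂) :=
      fun i j => ((h₁₁ i k).mul_prod (h₂₂ j l)).add ((h₁₂ i k).mul_prod (h₂₁ j l))
    have h1 : (∫ p : E₁ × E₂,
          ⟪gradient uh ((WithLp.equiv 2 (E₁ × E₂)).symm p),
            gradient
              (fun q : WithLp 2 (E₁ × E₂) =>
                γ k (WithLp.equiv 2 (E₁ × E₂) q).1 * β l (WithLp.equiv 2 (E₁ × E₂) q).2)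
              ((WithLp.equiv 2 (E₁ × E₂)).symm p)⟫ ∂(μ₁.prod μ₂))
        = ∫ p : E₁ × E₂, (∑ i, ∑ j, U (i, j) *
            (⟪gradient (φ i) p.1, gradient (γ k) p.1⟫ * (ψ j p.2 * β l p.2)
              + φ i p.1 * γ k p.1 * ⟪gradient (ψ j) p.2, gradient (β l) p.2⟫)) ∂(μ₁.prod μ₂) := by
      refine integral_congr_ae (Filter.Eventually.of_forall fun p => ?_)
      exact hptwise k l p.1 p.2
    rw [h1, integral_finset_sum _ (fun i _ =>
      integrable_finset_sum _ (fun j _ => (hInt i j).const_mul _))]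
    have h2 : ∀ i : Fin N, (∫ p : E₁ × E₂, (∑ j, U (i, j) *
          (⟪gradient (φ i) p.1, gradient (γ k) p.1⟫ * (ψ j p.2 * β l p.2)
            + φ i p.1 * γ k p.1 * ⟪gradient (ψ j) p.2, gradient (β l) p.2⟫)) ∂(μ₁.prod μ₂))
        = ∑ j, U (i, j) * (K₁₁ k i * K₂₂ l j + K₁₂ k i * K₂₁ l j) := by
      intro i
      rw [integral_finset_sum _ (fun j _ => (hInt i j).const_mul _)]
      refine Finset.sum_congr rfl fun j _ => ?_
      rw [MeasureTheory.integral_const_mul, integral_add ((h₁₁ i k).mul_prod (h₂₂ j l))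
        ((h₁₂ i k).mul_prod (h₂₁ j l))]
      have e1 := MeasureTheory.integral_prod_mul (μ := μ₁) (ν := μ₂)
        (f := fun x => (⟪gradient (φ i) x, gradient (γ k) x⟫ : ℝ))
        (g := fun y => ψ j y * β l y)
      have e2 := MeasureTheory.integral_prod_mul (μ := μ₁) (ν := μ₂)
        (f := fun x => φ i x * γ k x)
        (g := fun y => (⟪gradient (ψ j) y, gradient (β l) y⟫ : ℝ))
      rw [e1, e2, ← hK₁₁, ← hK₂₂, ← hK₁₂, ← hK₂₁]
    simp only [h2]
    simp only [Matrix.mulVec, dotProduct, Matrix.add_apply, Matrix.kroneckerMap_apply,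
      Fintype.sum_prod_type]
    refine Finset.sum_congr rfl fun i _ => Finset.sum_congr rfl fun j _ => ?_
    ring
  constructor
  · intro h
    funext p
    obtain ⟨k, l⟩ := p
    rw [← key k l]
    exact h k l
  · intro h k l
    rw [key k l, h]
end

section
/- Let E₁ and E₂ be finite-dimensional real inner product spaces equipped with σ-finite measures μ₁ and μ₂, let b₂ ∈ E₂, b = (0, b₂), and let κ, τ ∈ ℝ. Let (φ_i)_{i∈Fin N}, (γ_k)_{k∈Fin N} : E₁ → ℝ and (ψ_j)_{j∈Fin M}, (β_l)_{l∈Fin M} : E₂ → ℝ be twice continuously differentiable families such that all integrands below are integrable. Define matrices (K₁₁)_{ki} = ∫⟪∇φ_i,∇γ_k⟫dμ₁, (K₁₂)_{ki} = ∫φ_i γ_k dμ₁, (K₁₃)_{ki} = ∫Δφ_i · γ_k dμ₁ on Fin N, and (K₂₁)_{lj} = ∫⟪∇ψ_j,∇β_l⟫dμ₂, (K₂₂)_{lj} = ∫ψ_j β_l dμ₂, (K₂₃)_{lj} = ∫⟪b₂,∇ψ_j⟫ β_l dμ₂, (K₂₄)_{lj} = ∫ψ_j ⟪b₂,∇β_l⟫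 dμ₂, (K₂₅)_{lj} = ∫Δψ_j · ⟪b₂,∇β_l⟫ dμ₂, (K₂₆)_{lj} = ∫⟪b₂,∇ψ_j⟫⟪b₂,∇β_l⟫ dμ₂ on Fin M. Then the matrix S on Fin N × Fin M with entries S_{(k,l),(i,j)} = ∫_{E₁×E₂} [ κ ⟪∇(φ_i ψ_j), ∇(γ_k β_l)⟫ + ⟪b, ∇(φ_i ψ_j)⟫ γ_k β_l + (−κ Δ(φ_i ψ_j) + ⟪b, ∇(φ_i ψ_j)⟫) · τ ⟪b, ∇(γ_k β_l)⟫ ] d(μ₁ × μ₂) equals κ K₁₁ ⊗ K₂₂ + κ K₁₂ ⊗ K₂₁ + K₁₂ ⊗ K₂₃ − κτ K₁₃ ⊗ K₂₄ − κτ K₁₂ ⊗ K₂₅ + τ K₁₂ ⊗ K₂₆. -/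
open RealInnerProductSpace MeasureTheory Kronecker

/-- The Laplacian of a real-valued function on a finite-dimensional real inner product
space: the sum, over an orthonormal basis `(eᵢ)`, of the second directional derivatives
of `f` in the directions `eᵢ`. -/
noncomputable def laplacian {E : Type*} [NormedAddCommGroup E] [InnerProductSpace ℝ E]
    [FiniteDimensional ℝ E] (f : E → ℝ) (x : E) : ℝ :=
  ∑ i, iteratedDeriv 2 (fun t : ℝ => f (x + t • stdOrthonormalBasis ℝ E i)) 0

set_option linter.unusedSectionVars false


section aux
variable {E : Type*} [NormedAddCommGroup E] [InnerProductSpace ℝ E] [FiniteDimensional ℝ E]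

lemma deriv_line (f : E → ℝ) (hf : Differentiable ℝ f) (x v : E) (t : ℝ) :
    deriv (fun s : ℝ => f (x + s • v)) t = fderiv ℝ f (x + t • v) v := by
  have h1 : HasDerivAt (fun s : ℝ => x + s • v) v t := by
    simpa using ((hasDerivAt_id t).smul_const v).const_add x
  exact ((hf (x + t • v)).hasFDerivAt.comp_hasDerivAt t h1).deriv

lemma lineDeriv2 (f : E → ℝ) (hf : ContDiff ℝ 2 f) (x v : E) :
    iteratedDeriv 2 (fun t : ℝ => f (x + t • v)) 0 = fderiv ℝ (fderiv ℝ f) x v v := by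
  have hd : Differentiable ℝ f := hf.differentiable two_ne_zero
  have h2 : Differentiable ℝ (fderiv ℝ f) :=
    (hf.fderiv_right (m := 1) (by norm_num)).differentiable one_ne_zero
  have h1 : HasDerivAt (fun s : ℝ => x + s • v) v (0:ℝ) := by
    simpa using ((hasDerivAt_id (0:ℝ)).smul_const v).const_add x
  have h3 : HasFDerivAt (fun z => fderiv ℝ f z v)
      ((ContinuousLinearMap.apply ℝ ℝ v).comp (fderiv ℝ (fderiv ℝ f) x)) (x + (0:ℝ) • v) := by
    simpa [Function.comp_def] using ((ContinuousLinearMap.apply ℝ ℝ v).hasFDerivAt.comp x (h2 x).hasFDerivAt)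
  have h4 := h3.comp_hasDerivAt (0:ℝ) h1
  have : iteratedDeriv 2 (fun t : ℝ => f (x + t • v)) 0
      = deriv (deriv (fun t : ℝ => f (x + t • v))) 0 := by
    rw [show (2:ℕ) = 1+1 from rfl, iteratedDeriv_succ, iteratedDeriv_one]
  rw [this]
  have hfun : deriv (fun s : ℝ => f (x + s • v)) = fun t => fderiv ℝ f (x + t • v) v :=
    funext (deriv_line f hd x v)
  rw [hfun]
  simpa [Function.comp_def] using h4.deriv

lemma sum_fderiv2_basis_eq {ι κ' : Type*} [Fintype ι] [Fintype κ']
    (B : E →L[ℝ] E →L[ℝ] ℝ) (b : OrthonormalBasis ι ℝ E) (c : OrthonormalBasis κ' ℝ E) :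
    ∑ i, B (b i) (b i) = ∑ j, B (c j) (c j) := by
  have hexp : ∀ i, b i = ∑ j, ⟪c j, b i⟫ • c j := fun i => (c.sum_repr' (b i)).symm
  have step : ∀ i, B (b i) (b i) = ∑ j, ∑ k, (⟪c j, b i⟫ * ⟪c k, b i⟫) * B (c j) (c k) := by
    intro i
    conv_lhs => rw [hexp i]
    simp [map_sum, _root_.map_smul, ContinuousLinearMap.sum_apply, ContinuousLinearMap.smul_apply,
      Finset.mul_sum, smul_eq_mul, mul_assoc, mul_left_comm]
    rw [Finset.sum_comm]
    exact Finset.sum_congr rfl fun j _ => Finset.sum_congr rfl fun k _ => by ring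
  calc ∑ i, B (b i) (b i) = ∑ i, ∑ j, ∑ k, (⟪c j, b i⟫ * ⟪c k, b i⟫) * B (c j) (c k) := by
        simp [step]
    _ = ∑ j, ∑ k, (∑ i, ⟪c j, b i⟫ * ⟪c k, b i⟫) * B (c j) (c k) := by
        rw [Finset.sum_comm]
        refine Finset.sum_congr rfl fun j _ => ?_
        rw [Finset.sum_comm]
        simp [Finset.sum_mul]
    _ = ∑ j, ∑ k, (⟪c j, c k⟫ : ℝ) * B (c j) (c k) := by
        refine Finset.sum_congr rfl fun j _ => Finset.sum_congr rfl fun k _ => ?_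
        congr 1
        have := b.sum_inner_mul_inner (c j) (c k)
        calc ∑ i, ⟪c j, b i⟫ * ⟪c k, b i⟫ = ∑ i, ⟪c j, b i⟫ * ⟪b i, c k⟫ := by
              simp [real_inner_comm]
          _ = ⟪c j, c k⟫ := this
    _ = ∑ j, B (c j) (c j) := by
        refine Finset.sum_congr rfl fun j _ => ?_
        rw [Finset.sum_eq_single j]
        · simp [real_inner_self_eq_norm_sq, c.orthonormal.1 j]
        · intro k _ hk
          simp [c.orthonormal.2 (Ne.symm hk)]
        · simp
end aux

section aux2
set_option linter.unusedSectionVars false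
variable {E : Type*} [NormedAddCommGroup E] [InnerProductSpace ℝ E] [FiniteDimensional ℝ E]
lemma inner_gradient (g : E → ℝ) (x u : E) : ⟪gradient g x, u⟫ = fderiv ℝ g x u := by
  rw [gradient, InnerProductSpace.toDual_symm_apply]

lemma laplacian_eq_sum {ι : Type*} [Fintype ι] (f : E → ℝ) (hf : ContDiff ℝ 2 f)
    (x : E) (b : OrthonormalBasis ι ℝ E) :
    laplacian f x = ∑ i, iteratedDeriv 2 (fun t : ℝ => f (x + t • b i)) 0 := by
  unfold laplacian
  simp_rw [lineDeriv2 f hf x]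
  exact sum_fderiv2_basis_eq _ (stdOrthonormalBasis ℝ E) b
end aux2


lemma iteratedDeriv2_mul_const (g : ℝ → ℝ) (hg : ContDiff ℝ 2 g) (c x : ℝ) :
    iteratedDeriv 2 (fun t => g t * c) x = iteratedDeriv 2 g x * c := by
  have hg1 : Differentiable ℝ g := hg.differentiable two_ne_zero
  have hd : Differentiable ℝ (deriv g) := by
    have := hg.differentiable_iteratedDeriv 1 (by norm_num)
    rwa [iteratedDeriv_one] at this
  have h1 : deriv (fun t => g t * c) = fun t => deriv g t * c :=
    funext fun t => deriv_mul_const (hg1 t) c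
  simp only [show (2:ℕ) = 1 + 1 from rfl, iteratedDeriv_succ, iteratedDeriv_zero, h1]
  exact deriv_mul_const (hd x) c

lemma iteratedDeriv2_const_mul (g : ℝ → ℝ) (hg : ContDiff ℝ 2 g) (c x : ℝ) :
    iteratedDeriv 2 (fun t => c * g t) x = c * iteratedDeriv 2 g x := by
  simp only [mul_comm c]
  exact iteratedDeriv2_mul_const g hg c x

section prod
variable {E₁ E₂ : Type*}
  [NormedAddCommGroup E₁] [InnerProductSpace ℝ E₁] [FiniteDimensional ℝ E₁]
  [NormedAddCommGroup E₂] [InnerProductSpace ℝ E₂] [FiniteDimensional ℝ E₂]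

lemma contDiff_prodfun (φ : E₁ → ℝ) (ψ : E₂ → ℝ) (hφ : ContDiff ℝ 2 φ) (hψ : ContDiff ℝ 2 ψ) :
    ContDiff ℝ 2 (fun q : WithLp 2 (E₁ × E₂) =>
      φ (WithLp.equiv 2 (E₁ × E₂) q).1 * ψ (WithLp.equiv 2 (E₁ × E₂) q).2) := by
  have h1 : ContDiff ℝ 2 (fun q : WithLp 2 (E₁ × E₂) => (WithLp.equiv 2 (E₁ × E₂) q).1) :=
    ((ContinuousLinearMap.fst ℝ E₁ E₂).comp
      (WithLp.prodContinuousLinearEquiv 2 ℝ E₁ E₂ :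
        WithLp 2 (E₁ × E₂) →L[ℝ] E₁ × E₂)).contDiff
  have h2 : ContDiff ℝ 2 (fun q : WithLp 2 (E₁ × E₂) => (WithLp.equiv 2 (E₁ × E₂) q).2) :=
    ((ContinuousLinearMap.snd ℝ E₁ E₂).comp
      (WithLp.prodContinuousLinearEquiv 2 ℝ E₁ E₂ :
        WithLp 2 (E₁ × E₂) →L[ℝ] E₁ × E₂)).contDiff
  exact (hφ.comp h1).mul (hψ.comp h2)

lemma gradient_prodfun (φ : E₁ → ℝ) (ψ : E₂ → ℝ) (hφ : ContDiff ℝ 2 φ) (hψ : ContDiff ℝ 2 ψ)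
    (p : E₁ × E₂) :
    gradient (fun q : WithLp 2 (E₁ × E₂) =>
        φ (WithLp.equiv 2 (E₁ × E₂) q).1 * ψ (WithLp.equiv 2 (E₁ × E₂) q).2)
      ((WithLp.equiv 2 (E₁ × E₂)).symm p)
    = (WithLp.equiv 2 (E₁ × E₂)).symm
        (ψ p.2 • gradient φ p.1, φ p.1 • gradient ψ p.2) := by
  set L : WithLp 2 (E₁ × E₂) →L[ℝ] E₁ × E₂ :=
    (WithLp.prodContinuousLinearEquiv 2 ℝ E₁ E₂ : WithLp 2 (E₁ × E₂) →L[ℝ] E₁ × E₂) with hL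
  set pt : WithLp 2 (E₁ × E₂) := (WithLp.equiv 2 (E₁ × E₂)).symm p with hpt
  have hφd : HasFDerivAt φ (fderiv ℝ φ p.1) (((ContinuousLinearMap.fst ℝ E₁ E₂).comp L) pt) :=
    (hφ.differentiable two_ne_zero p.1).hasFDerivAt
  have hψd : HasFDerivAt ψ (fderiv ℝ ψ p.2) (((ContinuousLinearMap.snd ℝ E₁ E₂).comp L) pt) :=
    (hψ.differentiable two_ne_zero p.2).hasFDerivAt
  have h1 : HasFDerivAt (fun q : WithLp 2 (E₁ × E₂) => φ (WithLp.equiv 2 (E₁ × E₂) q).1)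
      ((fderiv ℝ φ p.1).comp ((ContinuousLinearMap.fst ℝ E₁ E₂).comp L)) pt :=
    hφd.comp pt ((ContinuousLinearMap.fst ℝ E₁ E₂).comp L).hasFDerivAt
  have h2 : HasFDerivAt (fun q : WithLp 2 (E₁ × E₂) => ψ (WithLp.equiv 2 (E₁ × E₂) q).2)
      ((fderiv ℝ ψ p.2).comp ((ContinuousLinearMap.snd ℝ E₁ E₂).comp L)) pt :=
    hψd.comp pt ((ContinuousLinearMap.snd ℝ E₁ E₂).comp L).hasFDerivAt
  have h3 := h1.mul h2
  have hD : InnerProductSpace.toDual ℝ (WithLp 2 (E₁ × E₂))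
        ((WithLp.equiv 2 (E₁ × E₂)).symm (ψ p.2 • gradient φ p.1, φ p.1 • gradient ψ p.2))
      = (φ (WithLp.equiv 2 (E₁ × E₂) pt).1 •
          (fderiv ℝ ψ p.2).comp ((ContinuousLinearMap.snd ℝ E₁ E₂).comp L) +
        ψ (WithLp.equiv 2 (E₁ × E₂) pt).2 •
          (fderiv ℝ φ p.1).comp ((ContinuousLinearMap.fst ℝ E₁ E₂).comp L)) := by
    apply ContinuousLinearMap.ext
    intro w
    simp only [InnerProductSpace.toDual_apply_apply, WithLp.prod_inner_apply,       WithLp.equiv_symm_apply, WithLp.toLp_fst, WithLp.toLp_snd, WithLp.equiv_apply, WithLp.ofLp_fst, WithLp.ofLp_snd, real_inner_smul_left,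
      ContinuousLinearMap.add_apply, ContinuousLinearMap.smul_apply,
      ContinuousLinearMap.comp_apply, ContinuousLinearMap.coe_fst', ContinuousLinearMap.coe_snd',
      smul_eq_mul, hpt, hL, ContinuousLinearEquiv.coe_coe, WithLp.prodContinuousLinearEquiv_apply]
    rw [inner_gradient, inner_gradient]
    ring
  rw [gradient, HasFDerivAt.fderiv (f := fun q : WithLp 2 (E₁ × E₂) =>
    φ (WithLp.equiv 2 (E₁ × E₂) q).1 * ψ (WithLp.equiv 2 (E₁ × E₂) q).2) h3, ← hD, LinearIsometryEquiv.symm_apply_apply]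

lemma laplacian_prodfun (φ : E₁ → ℝ) (ψ : E₂ → ℝ) (hφ : ContDiff ℝ 2 φ) (hψ : ContDiff ℝ 2 ψ)
    (p : E₁ × E₂) :
    laplacian (fun q : WithLp 2 (E₁ × E₂) =>
        φ (WithLp.equiv 2 (E₁ × E₂) q).1 * ψ (WithLp.equiv 2 (E₁ × E₂) q).2)
      ((WithLp.equiv 2 (E₁ × E₂)).symm p)
    = laplacian φ p.1 * ψ p.2 + φ p.1 * laplacian ψ p.2 := by
  rw [laplacian_eq_sum _ (contDiff_prodfun φ ψ hφ hψ) _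
    ((stdOrthonormalBasis ℝ E₁).prod (stdOrthonormalBasis ℝ E₂))]
  rw [Fintype.sum_sum_type]
  congr 1
  · unfold laplacian
    rw [Finset.sum_mul]
    refine Finset.sum_congr rfl fun i _ => ?_
    have hfun : (fun t : ℝ => φ (WithLp.equiv 2 (E₁ × E₂) ((WithLp.equiv 2 (E₁ × E₂)).symm p +
          t • (stdOrthonormalBasis ℝ E₁).prod (stdOrthonormalBasis ℝ E₂) (Sum.inl i))).1 *
        ψ (WithLp.equiv 2 (E₁ × E₂) ((WithLp.equiv 2 (E₁ × E₂)).symm p +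
          t • (stdOrthonormalBasis ℝ E₁).prod (stdOrthonormalBasis ℝ E₂) (Sum.inl i))).2)
        = fun t : ℝ => φ (p.1 + t • stdOrthonormalBasis ℝ E₁ i) * ψ p.2 := by
      funext t
      simp [WithLp.ofLp_fst, WithLp.ofLp_snd, WithLp.add_fst, WithLp.add_snd,
        WithLp.smul_fst, WithLp.smul_snd, WithLp.equiv_symm_apply, WithLp.toLp_fst, WithLp.toLp_snd,
        OrthonormalBasis.prod_apply]
    have hc : ContDiff ℝ 2 (fun t : ℝ => φ (p.1 + t • stdOrthonormalBasis ℝ E₁ i)) :=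
      hφ.comp (contDiff_const.add (contDiff_id.smul contDiff_const))
    rw [hfun, iteratedDeriv2_mul_const _ hc]
  · unfold laplacian
    rw [Finset.mul_sum]
    refine Finset.sum_congr rfl fun i _ => ?_
    have hfun : (fun t : ℝ => φ (WithLp.equiv 2 (E₁ × E₂) ((WithLp.equiv 2 (E₁ × E₂)).symm p +
          t • (stdOrthonormalBasis ℝ E₁).prod (stdOrthonormalBasis ℝ E₂) (Sum.inr i))).1 *
        ψ (WithLp.equiv 2 (E₁ × E₂) ((WithLp.equiv 2 (E₁ × E₂)).symm p +
          t • (stdOrthonormalBasis ℝ E₁).prod (stdOrthonormalBasis ℝ E₂) (Sum.inr i))).2)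
        = fun t : ℝ => φ p.1 * ψ (p.2 + t • stdOrthonormalBasis ℝ E₂ i) := by
      funext t
      simp [WithLp.ofLp_fst, WithLp.ofLp_snd, WithLp.add_fst, WithLp.add_snd,
        WithLp.smul_fst, WithLp.smul_snd, WithLp.equiv_symm_apply, WithLp.toLp_fst, WithLp.toLp_snd,
        OrthonormalBasis.prod_apply]
    have hc : ContDiff ℝ 2 (fun t : ℝ => ψ (p.2 + t • stdOrthonormalBasis ℝ E₂ i)) :=
      hψ.comp (contDiff_const.add (contDiff_id.smul contDiff_const))
    rw [hfun, iteratedDeriv2_const_mul _ hc]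
end prod


/-- The global SUPG-stabilized stiffness matrix for the advection-diffusion
equation `−κΔu + b·∇u = f`, with advection vector `b = (0, b₂)` aligned with the second
subdomain, diffusivity `κ` and stabilization parameter `τ`, whose entries are
`S_{(k,l),(i,j)} = ∫ κ⟪∇(φᵢψⱼ),∇(γₖβₗ)⟫ + ⟪b,∇(φᵢψⱼ)⟫γₖβₗ
+ (−κΔ(φᵢψⱼ) + ⟪b,∇(φᵢψⱼ)⟫)·τ⟪b,∇(γₖβₗ)⟫ d(μ₁×μ₂)`, equals
`κ K₁₁⊗K₂₂ + κ K₁₂⊗K₂₁ + K₁₂⊗K₂₃ − κτ K₁₃⊗K₂₄ − κτ K₁₂⊗K₂₅ + τ K₁₂⊗K₂₆`. -/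
theorem supg_stiffness_matrix_kronecker {E₁ E₂ : Type*} {N M : ℕ}
    [NormedAddCommGroup E₁] [InnerProductSpace ℝ E₁] [FiniteDimensional ℝ E₁]
    [MeasurableSpace E₁] [BorelSpace E₁]
    [NormedAddCommGroup E₂] [InnerProductSpace ℝ E₂] [FiniteDimensional ℝ E₂]
    [MeasurableSpace E₂] [BorelSpace E₂]
    (μ₁ : Measure E₁) (μ₂ : Measure E₂) [SigmaFinite μ₁] [SigmaFinite μ₂]
    (b₂ : E₂) (κ τ : ℝ)
    (φ γ : Fin N → E₁ → ℝ) (ψ β : Fin M → E₂ → ℝ)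
    (hφ : ∀ i, ContDiff ℝ 2 (φ i)) (hγ : ∀ k, ContDiff ℝ 2 (γ k))
    (hψ : ∀ j, ContDiff ℝ 2 (ψ j)) (hβ : ∀ l, ContDiff ℝ 2 (β l))
    (i₁₁ : ∀ i k, Integrable (fun x => ⟪gradient (φ i) x, gradient (γ k) x⟫) μ₁)
    (i₁₂ : ∀ i k, Integrable (fun x => φ i x * γ k x) μ₁)
    (i₁₃ : ∀ i k, Integrable (fun x => laplacian (φ i) x * γ k x) μ₁)
    (i₂₁ : ∀ j l, Integrable (fun y => ⟪gradient (ψ j) y, gradient (β l) y⟫) μ₂)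
    (i₂₂ : ∀ j l, Integrable (fun y => ψ j y * β l y) μ₂)
    (i₂₃ : ∀ j l, Integrable (fun y => ⟪b₂, gradient (ψ j) y⟫ * β l y) μ₂)
    (i₂₄ : ∀ j l, Integrable (fun y => ψ j y * ⟪b₂, gradient (β l) y⟫) μ₂)
    (i₂₅ : ∀ j l, Integrable (fun y => laplacian (ψ j) y * ⟪b₂, gradient (β l) y⟫) μ₂)
    (i₂₆ : ∀ j l, Integrable (fun y => ⟪b₂, gradient (ψ j) y⟫ * ⟪b₂, gradient (β l) y⟫) μ₂)
    (K₁₁ K₁₂ K₁₃ : Matrix (Fin N) (Fin N) ℝ)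
    (K₂₁ K₂₂ K₂₃ K₂₄ K₂₅ K₂₆ : Matrix (Fin M) (Fin M) ℝ)
    (hK₁₁ : ∀ k i, K₁₁ k i = ∫ x, ⟪gradient (φ i) x, gradient (γ k) x⟫ ∂μ₁)
    (hK₁₂ : ∀ k i, K₁₂ k i = ∫ x, φ i x * γ k x ∂μ₁)
    (hK₁₃ : ∀ k i, K₁₃ k i = ∫ x, laplacian (φ i) x * γ k x ∂μ₁)
    (hK₂₁ : ∀ l j, K₂₁ l j = ∫ y, ⟪gradient (ψ j) y, gradient (β l) y⟫ ∂μ₂)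
    (hK₂₂ : ∀ l j, K₂₂ l j = ∫ y, ψ j y * β l y ∂μ₂)
    (hK₂₃ : ∀ l j, K₂₃ l j = ∫ y, ⟪b₂, gradient (ψ j) y⟫ * β l y ∂μ₂)
    (hK₂₄ : ∀ l j, K₂₄ l j = ∫ y, ψ j y * ⟪b₂, gradient (β l) y⟫ ∂μ₂)
    (hK₂₅ : ∀ l j, K₂₅ l j = ∫ y, laplacian (ψ j) y * ⟪b₂, gradient (β l) y⟫ ∂μ₂)
    (hK₂₆ : ∀ l j, K₂₆ l j = ∫ y, ⟪b₂, gradient (ψ j) y⟫ * ⟪b₂, gradient (β l) y⟫ ∂μ₂)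
    (S : Matrix (Fin N × Fin M) (Fin N × Fin M) ℝ)
    (hS : ∀ k l i j, S (k, l) (i, j) =
      ∫ p : E₁ × E₂,
        (κ * ⟪gradient
                (fun q : WithLp 2 (E₁ × E₂) =>
                  φ i (WithLp.equiv 2 (E₁ × E₂) q).1 * ψ j (WithLp.equiv 2 (E₁ × E₂) q).2)
                ((WithLp.equiv 2 (E₁ × E₂)).symm p),
              gradient
                (fun q : WithLp 2 (E₁ × E₂) =>
                  γ k (WithLp.equiv 2 (E₁ × E₂) q).1 * β l (WithLp.equiv 2 (E₁ × E₂) q).2)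
                ((WithLp.equiv 2 (E₁ × E₂)).symm p)⟫
          + ⟪(WithLp.equiv 2 (E₁ × E₂)).symm ((0 : E₁), b₂),
              gradient
                (fun q : WithLp 2 (E₁ × E₂) =>
                  φ i (WithLp.equiv 2 (E₁ × E₂) q).1 * ψ j (WithLp.equiv 2 (E₁ × E₂) q).2)
                ((WithLp.equiv 2 (E₁ × E₂)).symm p)⟫ * (γ k p.1 * β l p.2)
          + (-(κ * laplacian
                  (fun q : WithLp 2 (E₁ × E₂) =>
                    φ i (WithLp.equiv 2 (E₁ × E₂) q).1 * ψ j (WithLp.equiv 2 (E₁ × E₂) q).2)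
                  ((WithLp.equiv 2 (E₁ × E₂)).symm p))
              + ⟪(WithLp.equiv 2 (E₁ × E₂)).symm ((0 : E₁), b₂),
                  gradient
                    (fun q : WithLp 2 (E₁ × E₂) =>
                      φ i (WithLp.equiv 2 (E₁ × E₂) q).1 * ψ j (WithLp.equiv 2 (E₁ × E₂) q).2)
                    ((WithLp.equiv 2 (E₁ × E₂)).symm p)⟫)
            * (τ * ⟪(WithLp.equiv 2 (E₁ × E₂)).symm ((0 : E₁), b₂),
                  gradient
                    (fun q : WithLp 2 (E₁ × E₂) =>
                      γ k (WithLp.equiv 2 (E₁ × E₂) q).1 * β l (WithLp.equiv 2 (E₁ × E₂) q).2)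
                    ((WithLp.equiv 2 (E₁ × E₂)).symm p)⟫)) ∂(μ₁.prod μ₂)) :
    S = κ • (K₁₁ ⊗ₖ K₂₂) + κ • (K₁₂ ⊗ₖ K₂₁) + K₁₂ ⊗ₖ K₂₃
        - (κ * τ) • (K₁₃ ⊗ₖ K₂₄) - (κ * τ) • (K₁₂ ⊗ₖ K₂₅) + τ • (K₁₂ ⊗ₖ K₂₆) := by
  ext ⟨k, l⟩ ⟨i, j⟩
  rw [hS k l i j]
  have I1 : Integrable (fun p : E₁ × E₂ =>
      κ * (⟪gradient (φ i) p.1, gradient (γ k) p.1⟫ * (ψ j p.2 * β l p.2))) (μ₁.prod μ₂) :=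
    ((i₁₁ i k).mul_prod (i₂₂ j l)).const_mul κ
  have I2 : Integrable (fun p : E₁ × E₂ =>
      κ * ((φ i p.1 * γ k p.1) * ⟪gradient (ψ j) p.2, gradient (β l) p.2⟫)) (μ₁.prod μ₂) :=
    ((i₁₂ i k).mul_prod (i₂₁ j l)).const_mul κ
  have I3 : Integrable (fun p : E₁ × E₂ =>
      (φ i p.1 * γ k p.1) * (⟪b₂, gradient (ψ j) p.2⟫ * β l p.2)) (μ₁.prod μ₂) :=
    (i₁₂ i k).mul_prod (i₂₃ j l)
  have I4 : Integrable (fun p : E₁ × E₂ =>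
      κ * τ * ((laplacian (φ i) p.1 * γ k p.1) * (ψ j p.2 * ⟪b₂, gradient (β l) p.2⟫)))
      (μ₁.prod μ₂) :=
    ((i₁₃ i k).mul_prod (i₂₄ j l)).const_mul (κ * τ)
  have I5 : Integrable (fun p : E₁ × E₂ =>
      κ * τ * ((φ i p.1 * γ k p.1) * (laplacian (ψ j) p.2 * ⟪b₂, gradient (β l) p.2⟫)))
      (μ₁.prod μ₂) :=
    ((i₁₂ i k).mul_prod (i₂₅ j l)).const_mul (κ * τ)
  have I6 : Integrable (fun p : E₁ × E₂ =>
      τ * ((φ i p.1 * γ k p.1) * (⟪b₂, gradient (ψ j) p.2⟫ * ⟪b₂, gradient (β l) p.2⟫)))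
      (μ₁.prod μ₂) :=
    ((i₁₂ i k).mul_prod (i₂₆ j l)).const_mul τ
  calc
    ∫ p : E₁ × E₂,
        (κ * ⟪gradient
                (fun q : WithLp 2 (E₁ × E₂) =>
                  φ i (WithLp.equiv 2 (E₁ × E₂) q).1 * ψ j (WithLp.equiv 2 (E₁ × E₂) q).2)
                ((WithLp.equiv 2 (E₁ × E₂)).symm p),
              gradient
                (fun q : WithLp 2 (E₁ × E₂) =>
                  γ k (WithLp.equiv 2 (E₁ × E₂) q).1 * β l (WithLp.equiv 2 (E₁ × E₂) q).2)
                ((WithLp.equiv 2 (E₁ × E₂)).symm p)⟫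
          + ⟪(WithLp.equiv 2 (E₁ × E₂)).symm ((0 : E₁), b₂),
              gradient
                (fun q : WithLp 2 (E₁ × E₂) =>
                  φ i (WithLp.equiv 2 (E₁ × E₂) q).1 * ψ j (WithLp.equiv 2 (E₁ × E₂) q).2)
                ((WithLp.equiv 2 (E₁ × E₂)).symm p)⟫ * (γ k p.1 * β l p.2)
          + (-(κ * laplacian
                  (fun q : WithLp 2 (E₁ × E₂) =>
                    φ i (WithLp.equiv 2 (E₁ × E₂) q).1 * ψ j (WithLp.equiv 2 (E₁ × E₂) q).2)
                  ((WithLp.equiv 2 (E₁ × E₂)).symm p))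
              + ⟪(WithLp.equiv 2 (E₁ × E₂)).symm ((0 : E₁), b₂),
                  gradient
                    (fun q : WithLp 2 (E₁ × E₂) =>
                      φ i (WithLp.equiv 2 (E₁ × E₂) q).1 * ψ j (WithLp.equiv 2 (E₁ × E₂) q).2)
                    ((WithLp.equiv 2 (E₁ × E₂)).symm p)⟫)
            * (τ * ⟪(WithLp.equiv 2 (E₁ × E₂)).symm ((0 : E₁), b₂),
                  gradient
                    (fun q : WithLp 2 (E₁ × E₂) =>
                      γ k (WithLp.equiv 2 (E₁ × E₂) q).1 * β l (WithLp.equiv 2 (E₁ × E₂) q).2)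
                    ((WithLp.equiv 2 (E₁ × E₂)).symm p)⟫)) ∂(μ₁.prod μ₂)
      = ∫ p : E₁ × E₂,
          (κ * (⟪gradient (φ i) p.1, gradient (γ k) p.1⟫ * (ψ j p.2 * β l p.2))
          + κ * ((φ i p.1 * γ k p.1) * ⟪gradient (ψ j) p.2, gradient (β l) p.2⟫)
          + (φ i p.1 * γ k p.1) * (⟪b₂, gradient (ψ j) p.2⟫ * β l p.2)
          - κ * τ * ((laplacian (φ i) p.1 * γ k p.1) * (ψ j p.2 * ⟪b₂, gradient (β l) p.2⟫))
          - κ * τ * ((φ i p.1 * γ k p.1) * (laplacian (ψ j) p.2 * ⟪b₂, gradient (β l) p.2⟫))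
          + τ * ((φ i p.1 * γ k p.1) *
              (⟪b₂, gradient (ψ j) p.2⟫ * ⟪b₂, gradient (β l) p.2⟫))) ∂(μ₁.prod μ₂) := by
        refine integral_congr_ae (Filter.Eventually.of_forall fun p => ?_)
        beta_reduce
        rw [gradient_prodfun (φ i) (ψ j) (hφ i) (hψ j) p,
          gradient_prodfun (γ k) (β l) (hγ k) (hβ l) p,
          laplacian_prodfun (φ i) (ψ j) (hφ i) (hψ j) p]
        simp only [WithLp.prod_inner_apply, WithLp.equiv_symm_apply, WithLp.toLp_fst, WithLp.toLp_snd,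
          real_inner_smul_left, real_inner_smul_right, inner_zero_left, inner_zero_right]
        ring
    _ = κ * ((∫ x, ⟪gradient (φ i) x, gradient (γ k) x⟫ ∂μ₁) * ∫ y, ψ j y * β l y ∂μ₂)
        + κ * ((∫ x, φ i x * γ k x ∂μ₁) * ∫ y, ⟪gradient (ψ j) y, gradient (β l) y⟫ ∂μ₂)
        + (∫ x, φ i x * γ k x ∂μ₁) * ∫ y, ⟪b₂, gradient (ψ j) y⟫ * β l y ∂μ₂
        - κ * τ * ((∫ x, laplacian (φ i) x * γ k x ∂μ₁) *
            ∫ y, ψ j y * ⟪b₂, gradient (β l) y⟫ ∂μ₂)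
        - κ * τ * ((∫ x, φ i x * γ k x ∂μ₁) *
            ∫ y, laplacian (ψ j) y * ⟪b₂, gradient (β l) y⟫ ∂μ₂)
        + τ * ((∫ x, φ i x * γ k x ∂μ₁) *
            ∫ y, ⟪b₂, gradient (ψ j) y⟫ * ⟪b₂, gradient (β l) y⟫ ∂μ₂) := by
        have I12 : Integrable (fun p : E₁ × E₂ =>
            κ * (⟪gradient (φ i) p.1, gradient (γ k) p.1⟫ * (ψ j p.2 * β l p.2))
            + κ * ((φ i p.1 * γ k p.1) * ⟪gradient (ψ j) p.2, gradient (β l) p.2⟫)) (μ₁.prod μ₂) :=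
            I1.add I2
        have I123 : Integrable (fun p : E₁ × E₂ =>
            κ * (⟪gradient (φ i) p.1, gradient (γ k) p.1⟫ * (ψ j p.2 * β l p.2))
            + κ * ((φ i p.1 * γ k p.1) * ⟪gradient (ψ j) p.2, gradient (β l) p.2⟫)
            + (φ i p.1 * γ k p.1) * (⟪b₂, gradient (ψ j) p.2⟫ * β l p.2)) (μ₁.prod μ₂) :=
            I12.add I3
        have I1234 : Integrable (fun p : E₁ × E₂ =>
            κ * (⟪gradient (φ i) p.1, gradient (γ k) p.1⟫ * (ψ j p.2 * β l p.2))
            + κ * ((φ i p.1 * γ k p.1) * ⟪gradient (ψ j) p.2, gradient (β l) p.2⟫)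
            + (φ i p.1 * γ k p.1) * (⟪b₂, gradient (ψ j) p.2⟫ * β l p.2)
            - κ * τ * ((laplacian (φ i) p.1 * γ k p.1) * (ψ j p.2 * ⟪b₂, gradient (β l) p.2⟫))) (μ₁.prod μ₂) :=
            I123.sub I4
        have I12345 : Integrable (fun p : E₁ × E₂ =>
            κ * (⟪gradient (φ i) p.1, gradient (γ k) p.1⟫ * (ψ j p.2 * β l p.2))
            + κ * ((φ i p.1 * γ k p.1) * ⟪gradient (ψ j) p.2, gradient (β l) p.2⟫)
            + (φ i p.1 * γ k p.1) * (⟪b₂, gradient (ψ j) p.2⟫ * β l p.2)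
            - κ * τ * ((laplacian (φ i) p.1 * γ k p.1) * (ψ j p.2 * ⟪b₂, gradient (β l) p.2⟫))
            - κ * τ * ((φ i p.1 * γ k p.1) * (laplacian (ψ j) p.2 * ⟪b₂, gradient (β l) p.2⟫))) (μ₁.prod μ₂) :=
            I1234.sub I5
        rw [integral_add I12345 I6,
          integral_sub I1234 I5,
          integral_sub I123 I4,
          integral_add I12 I3,
          integral_add I1 I2,
          integral_const_mul, integral_const_mul, integral_const_mul, integral_const_mul,
          integral_const_mul,
          integral_prod_mul (fun x => ⟪gradient (φ i) x, gradient (γ k) x⟫)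
            (fun y => ψ j y * β l y),
          integral_prod_mul (fun x => φ i x * γ k x)
            (fun y => ⟪gradient (ψ j) y, gradient (β l) y⟫),
          integral_prod_mul (fun x => φ i x * γ k x) (fun y => ⟪b₂, gradient (ψ j) y⟫ * β l y),
          integral_prod_mul (fun x => laplacian (φ i) x * γ k x)
            (fun y => ψ j y * ⟪b₂, gradient (β l) y⟫),
          integral_prod_mul (fun x => φ i x * γ k x)
            (fun y => laplacian (ψ j) y * ⟪b₂, gradient (β l) y⟫),
          integral_prod_mul (fun x => φ i x * γ k x)
            (fun y => ⟪b₂, gradient (ψ j) y⟫ * ⟪b₂, gradient (β l) y⟫)]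
    _ = (κ • (K₁₁ ⊗ₖ K₂₂) + κ • (K₁₂ ⊗ₖ K₂₁) + K₁₂ ⊗ₖ K₂₃
        - (κ * τ) • (K₁₃ ⊗ₖ K₂₄) - (κ * τ) • (K₁₂ ⊗ₖ K₂₅) + τ • (K₁₂ ⊗ₖ K₂₆)) (k, l) (i, j) := by
        simp only [Matrix.add_apply, Matrix.sub_apply, Matrix.smul_apply,
          Matrix.kroneckerMap_apply, smul_eq_mul, hK₁₁, hK₁₂, hK₁₃, hK₂₁, hK₂₂, hK₂₃, hK₂₄,
          hK₂₅, hK₂₆]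
end
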